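/- Let β : ℝ → ℂ^W be such that β(t) ∈ 𝔤 for every t and each coefficient function t ↦ β(t)_w is continuous. Then there is a unique α : ℝ → ℂ^W with every coefficient function t ↦ α(t)_w continuously differentiable, α(0) = 1, and (d/dt) α(t)_w = (α(t)★β(t))_w for all words w and all t; moreover α(t) ∈ G for every t ∈ ℝ. -/
import Mathlib


open scoped BigOperators

/-- Convolution product on `ℂ^W`: `(δ★δ′)_w = Σ_{w=w₁w₂} δ_{w₁} δ′_{w₂}`. -/
noncomputable def conv {A : Type*} (x y : List A → ℂ) : List A → ℂ :=
  fun w => ∑ i ∈ Finset.range (w.length + 1), x (w.take i) * y (w.drop i)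

/-- Shuffle product of two words, as a multiset of words. -/
def shuffle {A : Type*} : List A → List A → Multiset (List A)
  | [], w => {w}
  | w, [] => {w}
  | a :: u, b :: v =>
      ((shuffle u (b :: v)).map (a :: ·)) + ((shuffle (a :: u) v).map (b :: ·))

/-- Membership in the group `G`: the shuffle relations with `γ_∅ = 1`. -/
def isGrp {A : Type*} (γ : List A → ℂ) : Prop :=
  γ [] = 1 ∧ ∀ w w' : List A, γ w * γ w' = ((shuffle w w').map γ).sum

/-- Membership in the Lie algebra `𝔤`. -/
def isLie {A : Type*} (β : List A → ℂ) : Prop :=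
  β [] = 0 ∧ ∀ w w' : List A, w ≠ [] → w' ≠ [] → ((shuffle w w').map β).sum = 0

/-- The unit `1` of the convolution product. -/
def unitCW {A : Type*} : List A → ℂ := fun w => match w with | [] => 1 | _ => 0



lemma shuffle_nil_left {A : Type*} (w : List A) : shuffle [] w = {w} := by
  cases w <;> simp [shuffle]
lemma shuffle_nil_right {A : Type*} (w : List A) : shuffle w [] = {w} := by
  cases w <;> simp [shuffle]
lemma shuffle_cons_cons {A : Type*} (a b : A) (u v : List A) :
    shuffle (a :: u) (b :: v) =
      ((shuffle u (b :: v)).map (a :: ·)) + ((shuffle (a :: u) v).map (b :: ·)) := by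
  rw [shuffle]

noncomputable def shsum {A : Type*} (f : List A → ℂ) (w w' : List A) : ℂ :=
  ((shuffle w w').map f).sum

lemma shsum_nil_left {A : Type*} (f : List A → ℂ) (w : List A) : shsum f [] w = f w := by
  simp [shsum, shuffle_nil_left]
lemma shsum_nil_right {A : Type*} (f : List A → ℂ) (w : List A) : shsum f w [] = f w := by
  simp [shsum, shuffle_nil_right]
lemma shsum_cons_cons {A : Type*} (f : List A → ℂ) (a b : A) (u v : List A) :
    shsum f (a :: u) (b :: v) =
      shsum (fun s => f (a :: s)) u (b :: v) + shsum (fun s => f (b :: s)) (a :: u) v := by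
  simp [shsum, shuffle_cons_cons, Multiset.map_map, Function.comp]


lemma conv_nil {A : Type*} (x y : List A → ℂ) : conv x y [] = x [] * y [] := by
  simp [conv]
lemma conv_cons {A : Type*} (x y : List A → ℂ) (a : A) (s : List A) :
    conv x y (a :: s) =
      x [] * y (a :: s) + conv (fun u => x (a :: u)) y s := by
  simp only [conv, List.length_cons]
  rw [Finset.sum_range_succ']
  simp [add_comm]

lemma shsum_add {A : Type*} (f g : List A → ℂ) (w w') :
    shsum (fun s => f s + g s) w w' = shsum f w w' + shsum g w w' := by
  simp [shsum, Multiset.sum_map_add]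

lemma shsum_mul_left {A : Type*} (c : ℂ) (f : List A → ℂ) (w w') :
    shsum (fun s => c * f s) w w' = c * shsum f w w' := by
  simp [shsum, Multiset.sum_map_mul_left]

lemma key {A : Type*} (w w' : List A) (x y : List A → ℂ) :
    shsum (conv x y) w w' =
      ∑ i ∈ Finset.range (w.length + 1), ∑ j ∈ Finset.range (w'.length + 1),
        shsum x (w.take i) (w'.take j) * shsum y (w.drop i) (w'.drop j) := by
  induction w generalizing w' x y with
  | nil =>
      simp [shsum_nil_left, conv]
  | cons a u ih =>
      induction w' generalizing x y with
      | nil =>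
          simp [shsum_nil_right, shsum_nil_left, conv]
      | cons b v ih' =>
          rw [shsum_cons_cons]
          have e1 : (fun s => conv x y (a :: s)) =
              (fun s => x [] * y (a :: s) + conv (fun u => x (a :: u)) y s) := by
            funext s; exact conv_cons x y a s
          have e2 : (fun s => conv x y (b :: s)) =
              (fun s => x [] * y (b :: s) + conv (fun u => x (b :: u)) y s) := by
            funext s; exact conv_cons x y b s
          rw [e1, e2, shsum_add, shsum_add, shsum_mul_left, shsum_mul_left]
          rw [ih (b :: v) (fun u => x (a :: u)) y, ih' (fun u => x (b :: u)) y]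
          simp only [List.length_cons]
          rw [Finset.sum_range_succ' (fun i => ∑ j ∈ Finset.range (v.length + 1 + 1),
                shsum x ((a::u).take i) ((b::v).take j) * shsum y ((a::u).drop i) ((b::v).drop j))]
          simp only [Finset.sum_range_succ', shsum_cons_cons, shsum_nil_left, shsum_nil_right,
            List.take_succ_cons, List.drop_succ_cons, List.take_zero, List.drop_zero,
            add_mul, mul_add, Finset.sum_add_distrib]
          ring

open Classical in
noncomputable def solAux {A : Type*} (β : ℝ → List A → ℂ) : ℕ → List A → ℝ → ℂ
  | 0, _, _ => 1
  | n+1, w, t =>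
    if w = [] then 1 else
      ∫ s in (0:ℝ)..t, ∑ i ∈ Finset.range w.length, solAux β n (w.take i) s * β s (w.drop i)

lemma solAux_nil {A : Type*} (β : ℝ → List A → ℂ) (n : ℕ) : solAux β n [] = fun _ => 1 := by
  funext t; cases n <;> simp [solAux]

lemma solAux_stable {A : Type*} (β : ℝ → List A → ℂ) :
    ∀ n m (w : List A), w.length ≤ n → w.length ≤ m → solAux β n w = solAux β m w := by
  intro n
  induction n with
  | zero =>
      intro m w hw _
      have : w = [] := List.length_eq_zero_iff.1 (Nat.le_zero.1 hw)
      subst this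
      rw [solAux_nil, solAux_nil]
  | succ n ih =>
      intro m w hw hw'
      rcases eq_or_ne w [] with rfl | hne
      · rw [solAux_nil, solAux_nil]
      · have hlen : 1 ≤ w.length := List.length_pos_iff.2 hne
        obtain ⟨m', rfl⟩ : ∃ m', m = m' + 1 := ⟨m - 1, by omega⟩
        funext t
        simp only [solAux, if_neg hne]
        congr 1
        funext s
        refine Finset.sum_congr rfl fun i hi => ?_
        have hi' : i < w.length := Finset.mem_range.1 hi
        have hlt : (w.take i).length ≤ n := by
          simp [List.length_take]; omega
        have hlt' : (w.take i).length ≤ m' := by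
          simp [List.length_take]; omega
        rw [ih m' _ hlt hlt']

noncomputable def sol {A : Type*} (β : ℝ → List A → ℂ) (w : List A) : ℝ → ℂ :=
  solAux β w.length w

lemma sol_nil {A : Type*} (β : ℝ → List A → ℂ) : sol β [] = fun _ => 1 := by
  simp [sol, solAux_nil]

lemma sol_ne_nil {A : Type*} (β : ℝ → List A → ℂ) {w : List A} (hne : w ≠ []) (t : ℝ) :
    sol β w t = ∫ s in (0:ℝ)..t, ∑ i ∈ Finset.range w.length, sol β (w.take i) s * β s (w.drop i) := by
  have hlen : 1 ≤ w.length := List.length_pos_iff.2 hne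
  obtain ⟨n, hn⟩ : ∃ n, w.length = n + 1 := ⟨w.length - 1, by omega⟩
  have h0 : sol β w = solAux β (n+1) w := by rw [← hn]; rfl
  rw [h0]
  simp only [solAux, if_neg hne]
  congr 1
  funext s
  refine Finset.sum_congr rfl fun i hi => ?_
  have hi' : i < w.length := Finset.mem_range.1 hi
  rw [solAux_stable β n ((w.take i).length) _ (by simp [List.length_take]; omega) le_rfl]
  rfl

lemma sol_props {A : Type*} (β : ℝ → List A → ℂ) (hβc : ∀ w : List A, Continuous (fun t => β t w)) :
    ∀ (w : List A), Continuous (sol β w) ∧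
      ∀ t, HasDerivAt (sol β w)
        (∑ i ∈ Finset.range w.length, sol β (w.take i) t * β t (w.drop i)) t := by
  suffices H : ∀ n (w : List A), w.length ≤ n → Continuous (sol β w) ∧
      ∀ t, HasDerivAt (sol β w)
        (∑ i ∈ Finset.range w.length, sol β (w.take i) t * β t (w.drop i)) t from
    fun w => H w.length w le_rfl
  intro n
  induction n with
  | zero =>
      intro w hw
      have : w = [] := List.length_eq_zero_iff.1 (Nat.le_zero.1 hw)
      subst this
      rw [sol_nil]
      exact ⟨continuous_const, fun t => by simpa using hasDerivAt_const t (1:ℂ)⟩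
  | succ n ih =>
      intro w hw
      rcases eq_or_ne w [] with rfl | hne
      · rw [sol_nil]
        exact ⟨continuous_const, fun t => by simpa using hasDerivAt_const t (1:ℂ)⟩
      · set g : ℝ → ℂ := fun s => ∑ i ∈ Finset.range w.length, sol β (w.take i) s * β s (w.drop i)
          with hg_def
        have hg : Continuous g := by
          apply continuous_finset_sum
          intro i hi
          have hi' : i < w.length := Finset.mem_range.1 hi
          have hlen : (w.take i).length ≤ n := by simp [List.length_take]; omega
          exact ((ih _ hlen).1).mul (hβc _)
        have heq : sol β w = fun t => ∫ s in (0:ℝ)..t, g s := funext fun t => sol_ne_nil β hne t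
        have hd : ∀ t, HasDerivAt (sol β w) (g t) t := by
          intro t
          rw [heq]
          exact intervalIntegral.integral_hasDerivAt_right (hg.intervalIntegrable _ _)
            hg.stronglyMeasurable.stronglyMeasurableAtFilter hg.continuousAt
        exact ⟨continuous_iff_continuousAt.2 fun t => (hd t).continuousAt, hd⟩

lemma conv_last {A : Type*} (x y : List A → ℂ) (hy : y [] = 0) (w : List A) :
    conv x y w = ∑ i ∈ Finset.range w.length, x (w.take i) * y (w.drop i) := by
  unfold conv
  rw [Finset.sum_range_succ]
  simp [hy]


-- uniqueness of solutions
lemma sol_uniq {A : Type*} (β : ℝ → List A → ℂ) (hβ0 : ∀ t, β t [] = 0)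
    (hβc : ∀ w : List A, Continuous (fun t => β t w))
    (α : ℝ → List A → ℂ)
    (hinit : α 0 = unitCW)
    (hderiv : ∀ (t : ℝ) (w : List A), HasDerivAt (fun s => α s w) (conv (α t) (β t) w) t) :
    ∀ (w : List A) (t : ℝ), α t w = sol β w t := by
  suffices H : ∀ n (w : List A), w.length ≤ n → ∀ t, α t w = sol β w t from
    fun w => H w.length w le_rfl
  intro n
  induction n with
  | zero =>
      intro w hw t
      have hw0 : w = [] := List.length_eq_zero_iff.1 (Nat.le_zero.1 hw)
      subst hw0
      have h1 : ∀ t, HasDerivAt (fun s => α s ([] : List A)) 0 t := by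
        intro t
        have := hderiv t []
        rwa [conv_last _ _ (hβ0 t), show (([]:List A)).length = 0 from rfl,
          Finset.range_zero, Finset.sum_empty] at this
      have hconst : ∀ t, α t ([] : List A) = α 0 [] :=
        fun t => is_const_of_deriv_eq_zero (fun s => (h1 s).differentiableAt)
          (fun s => (h1 s).deriv) t 0
      rw [hconst t, hinit, sol_nil]
      rfl
  | succ n ih =>
      intro w hw t
      rcases eq_or_ne w [] with rfl | hne
      · exact (by
          have h1 : ∀ t, HasDerivAt (fun s => α s ([] : List A)) 0 t := by
            intro t
            have := hderiv t []
            rwa [conv_last _ _ (hβ0 t), show (([]:List A)).length = 0 from rfl,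
              Finset.range_zero, Finset.sum_empty] at this
          have hconst : ∀ t, α t ([] : List A) = α 0 [] :=
            fun t => is_const_of_deriv_eq_zero (fun s => (h1 s).differentiableAt)
              (fun s => (h1 s).deriv) t 0
          rw [hconst t, hinit, sol_nil]
          rfl)

      · -- difference has zero derivative
        set g : ℝ → ℂ := fun t => α t w - sol β w t with hg
        have hd : ∀ t, HasDerivAt g 0 t := by
          intro t
          have hz : conv (α t) (β t) w -
              (∑ i ∈ Finset.range w.length, sol β (w.take i) t * β t (w.drop i)) = 0 := by
            rw [conv_last _ _ (hβ0 t), ← Finset.sum_sub_distrib]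
            apply Finset.sum_eq_zero
            intro i hi
            have hi' : i < w.length := Finset.mem_range.1 hi
            rw [ih (w.take i) (by simp [List.length_take]; omega) t]
            ring
          have h := (hderiv t w).sub ((sol_props β hβc w).2 t)
          rw [hz] at h
          exact h
        have hconst : ∀ s, g s = g 0 :=
          fun s => is_const_of_deriv_eq_zero (fun s => (hd s).differentiableAt)
            (fun s => (hd s).deriv) s 0
        have h0 : g 0 = 0 := by
          have : sol β w 0 = 0 := by
            rw [sol_ne_nil β hne 0, intervalIntegral.integral_same]
          simp [hg, hinit, this]
          cases w with
          | nil => exact absurd rfl hne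
          | cons a u => simp [unitCW]
        have := hconst t
        rw [h0] at this
        have : α t w - sol β w t = 0 := this
        exact sub_eq_zero.1 this

lemma hasDerivAt_msum {A : Type*} (M : Multiset (List A)) (f : ℝ → List A → ℂ)
    (f' : List A → ℂ) (t : ℝ) (h : ∀ u : List A, HasDerivAt (fun s => f s u) (f' u) t) :
    HasDerivAt (fun s => ((M.map (f s)).sum)) ((M.map f').sum) t := by
  induction M using Multiset.induction_on with
  | empty => simpa using hasDerivAt_const t (0:ℂ)
  | cons a s ih =>
      simp only [Multiset.map_cons, Multiset.sum_cons]
      exact (h a).add ih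

lemma shsum_unit {A : Type*} (w w' : List A) :
    shsum (unitCW : List A → ℂ) w w' = unitCW w * unitCW w' := by
  cases w with
  | nil => rw [shsum_nil_left]; simp [unitCW]
  | cons a u =>
      cases w' with
      | nil => rw [shsum_nil_right]; simp [unitCW]
      | cons b v =>
          rw [shsum_cons_cons]
          have h1 : (fun s => unitCW (a :: s)) = fun _ => (0:ℂ) := funext fun s => rfl
          have h2 : (fun s => unitCW (b :: s)) = fun _ => (0:ℂ) := funext fun s => rfl
          rw [h1, h2]
          simp [shsum, unitCW]

lemma grp_prop {A : Type*} (β : ℝ → List A → ℂ)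
    (hβ0 : ∀ t, β t [] = 0)
    (hβ2 : ∀ t (w w' : List A), w ≠ [] → w' ≠ [] → shsum (β t) w w' = 0)
    (α : ℝ → List A → ℂ)
    (hinit : α 0 = unitCW)
    (hderiv : ∀ (t : ℝ) (w : List A), HasDerivAt (fun s => α s w) (conv (α t) (β t) w) t) :
    ∀ (w w' : List A) (t : ℝ), α t w * α t w' = shsum (α t) w w' := by
  suffices H : ∀ N (w w' : List A), w.length + w'.length ≤ N → ∀ t,
      α t w * α t w' = shsum (α t) w w' from
    fun w w' => H (w.length + w'.length) w w' le_rfl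
  intro N
  induction N with
  | zero =>
      intro w w' hN t
      have hw : w = [] := List.length_eq_zero_iff.1 (by omega)
      have hw' : w' = [] := List.length_eq_zero_iff.1 (by omega)
      subst hw; subst hw'
      rw [shsum_nil_left]
      -- α t [] = 1
      have h1 : ∀ t, HasDerivAt (fun s => α s ([] : List A)) 0 t := by
        intro t
        have := hderiv t []
        rwa [conv_nil, hβ0 t, mul_zero] at this
      have hconst : ∀ t, α t ([] : List A) = α 0 [] :=
        fun t => is_const_of_deriv_eq_zero (fun s => (h1 s).differentiableAt)
          (fun s => (h1 s).deriv) t 0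
      rw [hconst t, hinit]
      simp [unitCW]
  | succ n ih =>
      intro w w' hN t
      -- F t := α t w * α t w' - shsum (α t) w w' has zero derivative
      have hD : ∀ t, HasDerivAt (fun s => α s w * α s w' - shsum (α s) w w') 0 t := by
        intro t
        have hP : HasDerivAt (fun s => α s w * α s w')
            (conv (α t) (β t) w * α t w' + α t w * conv (α t) (β t) w') t :=
          (hderiv t w).mul (hderiv t w')
        have hS : HasDerivAt (fun s => shsum (α s) w w')
            (shsum (conv (α t) (β t)) w w') t :=
          hasDerivAt_msum _ α (conv (α t) (β t)) t (fun u => hderiv t u)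
        have hzero : conv (α t) (β t) w * α t w' + α t w * conv (α t) (β t) w'
            - shsum (conv (α t) (β t)) w w' = 0 := by
          set x := α t with hx
          set y := β t with hy
          have hy0 : y [] = 0 := hβ0 t
          have hy2 : ∀ (p q : List A), p ≠ [] → q ≠ [] → shsum y p q = 0 :=
            fun p q => hβ2 t p q
          have hkey := key w w' x y
          have hFl : (∑ j ∈ Finset.range (w'.length + 1),
              shsum x (w.take w.length) (w'.take j) * shsum y (w.drop w.length) (w'.drop j))
              = x w * conv x y w' := by
            simp only [List.take_length, List.drop_length, shsum_nil_left]
            rw [Finset.sum_range_succ]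
            simp only [List.take_length, List.drop_length, hy0]
            rw [mul_zero, add_zero, conv_last _ _ hy0, Finset.mul_sum]
            refine Finset.sum_congr rfl fun j hj => ?_
            have hj' : j < w'.length := Finset.mem_range.1 hj
            have hlen : w.length + (w'.take j).length ≤ n := by
              simp [List.length_take]; omega
            rw [← ih w (w'.take j) hlen t, ← hx]
            ring
          have hFi : ∀ i ∈ Finset.range w.length,
              (∑ j ∈ Finset.range (w'.length + 1),
                shsum x (w.take i) (w'.take j) * shsum y (w.drop i) (w'.drop j))
              = (x (w.take i) * y (w.drop i)) * x w' := by
            intro i hi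
            have hi' : i < w.length := Finset.mem_range.1 hi
            rw [Finset.sum_range_succ]
            simp only [List.take_length, List.drop_length, shsum_nil_right]
            have hrest : (∑ j ∈ Finset.range w'.length,
                shsum x (w.take i) (w'.take j) * shsum y (w.drop i) (w'.drop j)) = 0 := by
              apply Finset.sum_eq_zero
              intro j hj
              have hj' : j < w'.length := Finset.mem_range.1 hj
              have hne1 : w.drop i ≠ [] := by
                rw [ne_eq, List.drop_eq_nil_iff]; omega
              have hne2 : w'.drop j ≠ [] := by
                rw [ne_eq, List.drop_eq_nil_iff]; omega
              rw [hy2 _ _ hne1 hne2, mul_zero]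
            rw [hrest, zero_add]
            have hlen : (w.take i).length + w'.length ≤ n := by
              simp [List.length_take]; omega
            rw [← ih (w.take i) w' hlen t, ← hx]
            ring
          rw [Finset.sum_range_succ, hFl, Finset.sum_congr rfl hFi] at hkey
          rw [hkey, conv_last _ _ hy0, Finset.sum_mul]
          ring
        have := hP.sub hS
        rwa [hzero] at this
      have hconst : ∀ s, α s w * α s w' - shsum (α s) w w'
          = α 0 w * α 0 w' - shsum (α 0) w w' :=
        fun s => is_const_of_deriv_eq_zero (fun s => (hD s).differentiableAt)
          (fun s => (hD s).deriv) s 0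
      have h0 : α 0 w * α 0 w' - shsum (α 0) w w' = 0 := by
        rw [hinit, shsum_unit, sub_self]
      have := hconst t
      rw [h0] at this
      exact sub_eq_zero.1 this

/-- If `β(t) ∈ 𝔤` for all `t` with continuous coefficients, then the
initial value problem `α(0) = 1`, `(d/dt)α(t) = α(t)★β(t)` has a unique solution with
`C¹` coefficients, and this solution satisfies `α(t) ∈ G` for all `t`. -/
theorem stmt6 {A : Type*} [Countable A] (β : ℝ → List A → ℂ)
    (hβ : ∀ t : ℝ, isLie (β t)) (hβc : ∀ w : List A, Continuous (fun t => β t w)) :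
    (∃! α : ℝ → List A → ℂ,
      (∀ w : List A, ContDiff ℝ 1 (fun t => α t w)) ∧
      α 0 = unitCW ∧
      (∀ (t : ℝ) (w : List A), HasDerivAt (fun s => α s w) (conv (α t) (β t) w) t)) ∧
    (∀ α : ℝ → List A → ℂ,
      (∀ w : List A, ContDiff ℝ 1 (fun t => α t w)) →
      α 0 = unitCW →
      (∀ (t : ℝ) (w : List A), HasDerivAt (fun s => α s w) (conv (α t) (β t) w) t) →
      ∀ t : ℝ, isGrp (α t)) := by
  have hβ0 : ∀ t, β t [] = 0 := fun t => (hβ t).1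
  have hβ2 : ∀ t (w w' : List A), w ≠ [] → w' ≠ [] → shsum (β t) w w' = 0 :=
    fun t w w' h h' => (hβ t).2 w w' h h'
  constructor
  · refine ⟨fun t w => sol β w t, ⟨?_, ?_, ?_⟩, ?_⟩
    · intro w
      rw [contDiff_one_iff_deriv]
      refine ⟨fun t => ((sol_props β hβc w).2 t).differentiableAt, ?_⟩
      have hder : deriv (fun t => sol β w t)
          = fun t => ∑ i ∈ Finset.range w.length, sol β (w.take i) t * β t (w.drop i) :=
        funext fun t => ((sol_props β hβc w).2 t).deriv
      rw [hder]
      exact continuous_finset_sum _ fun i _ => ((sol_props β hβc _).1).mul (hβc _)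
    · funext w
      show sol β w 0 = unitCW w
      cases w with
      | nil => rw [sol_nil]; rfl
      | cons a u =>
          rw [sol_ne_nil β (by simp : (a :: u : List A) ≠ []) 0,
            intervalIntegral.integral_same]
          rfl
    · intro t w
      rw [conv_last _ _ (hβ0 t)]
      exact (sol_props β hβc w).2 t
    · rintro α' ⟨h1, h2, h3⟩
      funext t w
      exact sol_uniq β hβ0 hβc α' h2 h3 w t
  · intro α h1 h2 h3 t
    constructor
    · have hd : ∀ t, HasDerivAt (fun s => α s ([] : List A)) 0 t := by
        intro t
        have := h3 t []
        rwa [conv_nil, hβ0 t, mul_zero] at this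
      have hconst : α t ([] : List A) = α 0 [] :=
        is_const_of_deriv_eq_zero (fun s => (hd s).differentiableAt)
          (fun s => (hd s).deriv) t 0
      rw [hconst, h2]
      rfl
    · intro w w'
      exact grp_prop β hβ0 hβ2 α h2 h3 w w' t
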